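/- Suppose f(y) > 0 for all y ∈ Y, and suppose α > p*/q*. Then the minimum of the loss function L over Y equals p*, i.e., min_{y ∈ Y} L(y) = p* (Proposition 1: the loss function is optimal). -/
import Mathlib


/-- Proposition 1 (optimal loss): if `f` is strictly positive and `α > p*/q*`,
then the minimum of the loss `L` over `Y` equals `p*`. -/
theorem cmpe_loss_min_eq_pstar {Y : Type*} [Fintype Y] [Nonempty Y]
    (f g : Y → ℝ) (α : ℝ)
    (hfeas : (Finset.univ.filter (fun y => g y ≤ 0)).Nonempty)
    (hinfeas : (Finset.univ.filter (fun y => 0 < g y)).Nonempty)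
    (hf : ∀ y, 0 < f y)
    (pstar qstar : ℝ)
    (hp : pstar = (Finset.univ.filter (fun y => g y ≤ 0)).inf' hfeas f)
    (hq : qstar = (Finset.univ.filter (fun y => 0 < g y)).inf' hinfeas (fun y => f y + g y))
    (hα : α > pstar / qstar)
    (L : Y → ℝ)
    (hL : ∀ y, L y = if g y ≤ 0 then f y else α * (f y + g y)) :
    Finset.univ.inf' Finset.univ_nonempty L = pstar := by
  have hqpos : 0 < qstar := by
    rw [hq]
    obtain ⟨y0, hy0, hval⟩ := Finset.exists_mem_eq_inf'
      hinfeas (fun y => f y + g y)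
    rw [hval]
    have : 0 < g y0 := (Finset.mem_filter.mp hy0).2
    have := hf y0
    linarith
  have hαq : pstar < α * qstar := by
    have := (div_lt_iff₀ hqpos).mp hα
    linarith
  -- p* ≤ L y for all y
  have hlb : ∀ y : Y, pstar ≤ L y := by
    intro y
    rw [hL y]
    by_cases hy : g y ≤ 0
    · simp only [hy, if_pos]
      rw [hp]
      exact Finset.inf'_le f (Finset.mem_filter.mpr ⟨Finset.mem_univ y, hy⟩)
    · simp only [hy, if_neg, not_false_iff]
      have hgy : 0 < g y := lt_of_not_ge hy
      have hq' : qstar ≤ f y + g y := by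
        rw [hq]
        exact Finset.inf'_le _ (Finset.mem_filter.mpr ⟨Finset.mem_univ y, hgy⟩)
      have hαpos : 0 < α := by
        by_contra h
        push_neg at h
        have : α * qstar ≤ 0 := mul_nonpos_of_nonpos_of_nonneg h hqpos.le
        obtain ⟨y1, hy1, hval⟩ := Finset.exists_mem_eq_inf' hfeas f
        have : 0 < pstar := hp ▸ hval ▸ hf y1
        linarith
      calc pstar ≤ α * qstar := hαq.le
        _ ≤ α * (f y + g y) := by nlinarith
  apply le_antisymm
  · obtain ⟨y1, hy1, hval⟩ := Finset.exists_mem_eq_inf' hfeas f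
    have hLy1 : L y1 = pstar := by
      rw [hL y1, if_pos (Finset.mem_filter.mp hy1).2, hp, hval]
    calc Finset.univ.inf' Finset.univ_nonempty L ≤ L y1 :=
          Finset.inf'_le L (Finset.mem_univ y1)
      _ = pstar := hLy1
  · exact Finset.le_inf' _ _ (fun y _ => hlb y)
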